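/- For every natural number d, C(d,8) = (20160/20160)·L_d(2) − (12810/13440)·L_d(3) + (6770/10080)·L_d(4) − (1960/8064)·L_d(5) + (322/6720)·L_d(6) − (28/5760)·L_d(7) + (1/5040)·L_d(8) as rational numbers (the denominators being 8·7·6·5·4·3 = 20160, 8·7·6·5·4·2! = 13440, 8·7·6·5·3! = 10080, 8·7·6·4! = 8064, 8·7·5! = 6720, 8·6! = 5760, 7! = 5040), where L_d(w) = (1/w)·Σ_{r ∣ w} μ(r)·d^{w/r} is the Witt number. -/
import Mathlib

open ArithmeticFunction

lemma mu1' : (moebius 1 : ℤ) = 1 := moebius_apply_one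
lemma mu2' : (moebius 2 : ℤ) = -1 := moebius_apply_prime (by norm_num)
lemma mu3' : (moebius 3 : ℤ) = -1 := moebius_apply_prime (by norm_num)
lemma mu5' : (moebius 5 : ℤ) = -1 := moebius_apply_prime (by norm_num)
lemma mu7' : (moebius 7 : ℤ) = -1 := moebius_apply_prime (by norm_num)
lemma mu4' : (moebius 4 : ℤ) = 0 := by
  apply moebius_eq_zero_of_not_squarefree
  intro h; have := h 2 (by norm_num); norm_num at this
lemma mu8' : (moebius 8 : ℤ) = 0 := by
  apply moebius_eq_zero_of_not_squarefree
  intro h; have := h 2 (by norm_num); norm_num at this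
lemma mu6' : (moebius 6 : ℤ) = 1 := by
  have := isMultiplicative_moebius.map_mul_of_coprime (show Nat.Coprime 2 3 by norm_num)
  rw [show (2*3 : ℕ) = 6 by norm_num, mu2', mu3'] at this
  simpa using this

/-- The Witt number `L_d(w) = (1/w) * Σ_{r ∣ w} μ(r) * d^(w/r)`, as a rational number. -/
def witt (d w : ℕ) : ℚ :=
  (1 / w : ℚ) * ∑ r ∈ w.divisors, (ArithmeticFunction.moebius r : ℚ) * (d : ℚ) ^ (w / r)

lemma w2' (d : ℕ) : witt d 2 = ((d:ℚ)^2 - d)/2 := by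
  rw [witt, show Nat.divisors 2 = {1,2} by decide]
  simp [Finset.sum_insert, mu1', mu2']; ring
lemma w3' (d : ℕ) : witt d 3 = ((d:ℚ)^3 - d)/3 := by
  rw [witt, show Nat.divisors 3 = {1,3} by decide]
  simp [Finset.sum_insert, mu1', mu3']; ring
lemma w4' (d : ℕ) : witt d 4 = ((d:ℚ)^4 - d^2)/4 := by
  rw [witt, show Nat.divisors 4 = {1,2,4} by decide]
  simp [Finset.sum_insert, mu1', mu2', mu4']; ring
lemma w5' (d : ℕ) : witt d 5 = ((d:ℚ)^5 - d)/5 := by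
  rw [witt, show Nat.divisors 5 = {1,5} by decide]
  simp [Finset.sum_insert, mu1', mu5']; ring
lemma w6' (d : ℕ) : witt d 6 = ((d:ℚ)^6 - d^3 - d^2 + d)/6 := by
  rw [witt, show Nat.divisors 6 = {1,2,3,6} by decide]
  simp [Finset.sum_insert, mu1', mu2', mu3', mu6']; norm_num; ring
lemma w7' (d : ℕ) : witt d 7 = ((d:ℚ)^7 - d)/7 := by
  rw [witt, show Nat.divisors 7 = {1,7} by decide]
  simp [Finset.sum_insert, mu1', mu7']; ring
lemma w8' (d : ℕ) : witt d 8 = ((d:ℚ)^8 - d^4)/8 := by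
  rw [witt, show Nat.divisors 8 = {1,2,4,8} by decide]
  simp [Finset.sum_insert, mu1', mu2', mu4', mu8']; norm_num; ring

/-- C(d,8) = (20160/20160)·L_d(2) − (12810/13440)·L_d(3) + (6770/10080)·L_d(4) − (1960/8064)·L_d(5)
+ (322/6720)·L_d(6) − (28/5760)·L_d(7) + (1/5040)·L_d(8). -/
theorem choose_eight_eq (d : ℕ) :
    (d.choose 8 : ℚ) =
      (20160 / 20160) * witt d 2 - (12810 / 13440) * witt d 3 + (6770 / 10080) * witt d 4
        - (1960 / 8064) * witt d 5 + (322 / 6720) * witt d 6 - (28 / 5760) * witt d 7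
        + (1 / 5040) * witt d 8 := by
  rw [w2', w3', w4', w5', w6', w7', w8']
  rcases Nat.lt_or_ge d 8 with h | h
  · interval_cases d <;> rw [Nat.choose_eq_zero_of_lt (by norm_num)] <;> norm_num
  · obtain ⟨m, rfl⟩ := Nat.exists_eq_add_of_le h
    have h1 : ((8 + m).choose 8 : ℚ) * 40320 * m.factorial = (8 + m).factorial := by
      have := Nat.choose_mul_factorial_mul_factorial (show 8 ≤ 8 + m by omega)
      simp only [Nat.add_sub_cancel_left] at this
      exact_mod_cast this
    have h2 : ((8 + m).factorial : ℚ)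
        = ((m:ℚ)+8)*((m:ℚ)+7)*((m:ℚ)+6)*((m:ℚ)+5)*((m:ℚ)+4)*((m:ℚ)+3)*((m:ℚ)+2)*((m:ℚ)+1)
          * m.factorial := by
      have : (8 + m).factorial
          = (m+8)*((m+7)*((m+6)*((m+5)*((m+4)*((m+3)*((m+2)*((m+1)*m.factorial))))))) := by
        rw [show 8 + m = m + 8 by omega]; rfl
      rw [this]; push_cast; ring
    have hm : (m.factorial : ℚ) ≠ 0 := by
      exact_mod_cast m.factorial_ne_zero
    have key : ((8 + m).choose 8 : ℚ)
        = ((m:ℚ)+8)*((m:ℚ)+7)*((m:ℚ)+6)*((m:ℚ)+5)*((m:ℚ)+4)*((m:ℚ)+3)*((m:ℚ)+2)*((m:ℚ)+1)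
          / 40320 := by
      rw [h2] at h1
      have h3 := mul_right_cancel₀ hm h1
      rw [eq_div_iff (by norm_num : (40320:ℚ) ≠ 0)]
      exact h3
    rw [key]
    push_cast
    ring
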